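/- Let a, λ, r, r_X, D ∈ ℝ with λ ≥ 0, a²λ < 1, and D ≥ 0. For s ∈ [0, 1] define N(s) = a²(1 − s)(1 + a²λ s)(r_X² − r²)² − D(r_X² + a² s)². Then N is nonincreasing (antitone) on [0, 1]; in particular N(s) ≤ N(0) = a²(r_X² − r²)² − D r_X⁴ for all s ∈ [0, 1]. -/
import Mathlib


/-- Monotonicity in `s = cos²θ` of the numerator of the squared norm of the Killing field
`∂_{t_X}` on the Kerr–de Sitter exterior. -/
theorem killing_norm_numerator_antitone
    (a lam r rX D : ℝ) (hlam : 0 ≤ lam) (ha : a ^ 2 * lam < 1) (hD : 0 ≤ D)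
    (N : ℝ → ℝ)
    (hN : ∀ s, N s = a ^ 2 * (1 - s) * (1 + a ^ 2 * lam * s) * (rX ^ 2 - r ^ 2) ^ 2
        - D * (rX ^ 2 + a ^ 2 * s) ^ 2) :
    AntitoneOn N (Set.Icc 0 1) ∧
    (∀ s ∈ Set.Icc (0 : ℝ) 1, N s ≤ a ^ 2 * (rX ^ 2 - r ^ 2) ^ 2 - D * rX ^ 4) ∧
    N 0 = a ^ 2 * (rX ^ 2 - r ^ 2) ^ 2 - D * rX ^ 4 := by
  have hc : 0 ≤ a ^ 2 * lam := mul_nonneg (sq_nonneg a) hlam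
  have key : AntitoneOn N (Set.Icc 0 1) := by
    intro s hs t ht hst
    rw [hN s, hN t]
    obtain ⟨hs0, hs1⟩ := hs
    obtain ⟨ht0, ht1⟩ := ht
    nlinarith [mul_nonneg (mul_nonneg (sq_nonneg a) (sub_nonneg.2 hst))
        (sq_nonneg (rX ^ 2 - r ^ 2)),
      mul_nonneg (mul_nonneg hD (mul_nonneg (sq_nonneg a) (sub_nonneg.2 hst)))
        (add_nonneg (add_nonneg (sq_nonneg rX) (mul_nonneg (sq_nonneg a) ht0))
          (add_nonneg (sq_nonneg rX) (mul_nonneg (sq_nonneg a) hs0))),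
      mul_nonneg (mul_nonneg (mul_nonneg (sq_nonneg a) (sub_nonneg.2 hst))
        (sq_nonneg (rX ^ 2 - r ^ 2))) (mul_nonneg hc (add_nonneg hs0 ht0)),
      sub_nonneg.2 ha.le]
  have h0 : N 0 = a ^ 2 * (rX ^ 2 - r ^ 2) ^ 2 - D * rX ^ 4 := by
    rw [hN 0]; ring
  refine ⟨key, fun s hs => ?_, h0⟩
  have := key (Set.left_mem_Icc.2 zero_le_one) hs hs.1
  linarith [this]
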